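/- Let m ≥ 1 be an integer, α > 0 real, and c ∈ Fin m a common baseline label for the two units (c_{01} = c_{02} = c). Then ∑_{s ∈ Fin m} ∑_{t ∈ Fin m} q_α(s, s, t, t; c, c) = ( ((α+2)(α+1))² + 3(m-1)·((α+1)·α)² + (m-1)(m-2)·(α²)² ) / ((α·m+2)·(α·m+1))². (The left side is the conditional probability that the two units co-cluster in view 1 and co-cluster in view 2, given that they share the same baseline label.) -/

import Mathlib

/-- Indicator that the triple `(a, b, c)` has all three entries equal. -/
def isA {m : ℕ} (a b c : Fin m) : ℕ :=
  if a = b ∧ b = c then 1 else 0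

/-- Indicator that the triple `(a, b, c)` has three pairwise distinct entries. -/
def isB {m : ℕ} (a b c : Fin m) : ℕ :=
  if a ≠ b ∧ b ≠ c ∧ a ≠ c then 1 else 0

/-- Indicator that the triple `(a, b, c)` has exactly two equal entries. -/
def isC {m : ℕ} (a b c : Fin m) : ℕ :=
  if (a = b ∧ b ≠ c) ∨ (b ≠ c ∧ a = c) ∨ (a ≠ b ∧ b = c) then 1 else 0

/-- The conditional probability `q_α(c₁₁, c₁₂, c₂₁, c₂₂; c₀₁, c₀₂)` of the view
labels of two units in two views given their baseline labels (Proposition 1 of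
the paper, `n = J = 2` case).  The triple of unit `i` is `(c₀ᵢ, c₁ᵢ, c₂ᵢ)`. -/
noncomputable def q (m : ℕ) (α : ℝ) (c11 c12 c21 c22 c01 c02 : Fin m) : ℝ :=
  ((α + 2) * (α + 1)) ^ (isA c01 c11 c21 + isA c02 c12 c22) *
    (α ^ 2) ^ (isB c01 c11 c21 + isB c02 c12 c22) *
    ((α + 1) * α) ^ (isC c01 c11 c21 + isC c02 c12 c22) /
      ((α * m + 2) * (α * m + 1)) ^ 2

lemma q_pointwise (m : ℕ) (α : ℝ) (s t c : Fin m) :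
    q m α s s t t c c =
      (((α + 1) * α) ^ 2
        + (if s = c ∧ t = c then ((α + 2) * (α + 1)) ^ 2 - ((α + 1) * α) ^ 2 else 0)
        + (if s ≠ c ∧ t ≠ c ∧ s ≠ t then (α ^ 2) ^ 2 - ((α + 1) * α) ^ 2 else 0)) /
      ((α * m + 2) * (α * m + 1)) ^ 2 := by
  unfold q isA isB isC
  by_cases h1 : c = s <;> by_cases h2 : c = t <;> by_cases h3 : s = t <;>
    simp_all [eq_comm, Ne.symm]

lemma sumA (m : ℕ) (c : Fin m) (w : ℝ) :
    ∑ s : Fin m, ∑ t : Fin m, (if s = c ∧ t = c then w else 0) = w := by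
  simp [ite_and, Finset.sum_ite_eq']

lemma sumB_inner (m : ℕ) (c s : Fin m) (hs : s ≠ c) (w : ℝ) :
    ∑ t : Fin m, (if s ≠ c ∧ t ≠ c ∧ s ≠ t then w else 0) = ((m : ℝ) - 2) * w := by
  have h2 : 2 ≤ m := by
    have : 1 < Fintype.card (Fin m) := Fintype.one_lt_card_iff.mpr ⟨s, c, hs⟩
    simp at this; omega
  have h : ∑ t : Fin m, (if s ≠ c ∧ t ≠ c ∧ s ≠ t then w else 0)
      = ∑ t ∈ Finset.univ.filter (fun t : Fin m => s ≠ c ∧ t ≠ c ∧ s ≠ t), w := by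
    rw [Finset.sum_filter]
  rw [h, Finset.sum_const]
  have hf : Finset.univ.filter (fun t : Fin m => s ≠ c ∧ t ≠ c ∧ s ≠ t)
      = Finset.univ \ {c, s} := by
    ext t
    simp [hs, and_comm, eq_comm, not_or]
  rw [hf, Finset.card_sdiff_of_subset (by simp)]
  have hc : ({c, s} : Finset (Fin m)).card = 2 := by
    rw [Finset.card_insert_of_notMem (by simp [Ne.symm hs]), Finset.card_singleton]
  rw [hc, Finset.card_univ, Fintype.card_fin, nsmul_eq_mul, Nat.cast_sub h2]
  norm_num

/-- Probability of co-clustering in both views given equal baseline labels. -/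
theorem cocluster_given_equal_baseline (m : ℕ) (hm : 1 ≤ m) (α : ℝ) (hα : 0 < α)
    (c : Fin m) :
    (∑ s : Fin m, ∑ t : Fin m, q m α s s t t c c) =
      (((α + 2) * (α + 1)) ^ 2 + 3 * ((m : ℝ) - 1) * ((α + 1) * α) ^ 2 +
          ((m : ℝ) - 1) * ((m : ℝ) - 2) * (α ^ 2) ^ 2) /
        ((α * m + 2) * (α * m + 1)) ^ 2 := by
  set X : ℝ := ((α + 2) * (α + 1)) ^ 2 with hX
  set Y : ℝ := (α ^ 2) ^ 2 with hY
  set Z : ℝ := ((α + 1) * α) ^ 2 with hZ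
  have key : (∑ s : Fin m, ∑ t : Fin m, q m α s s t t c c)
      = (∑ s : Fin m, ∑ t : Fin m,
          (Z + (if s = c ∧ t = c then X - Z else 0)
             + (if s ≠ c ∧ t ≠ c ∧ s ≠ t then Y - Z else 0)))
        / ((α * m + 2) * (α * m + 1)) ^ 2 := by
    simp_rw [q_pointwise, ← Finset.sum_div]
    rfl
  rw [key]
  congr 1
  have hsplit : (∑ s : Fin m, ∑ t : Fin m,
      (Z + (if s = c ∧ t = c then X - Z else 0)
         + (if s ≠ c ∧ t ≠ c ∧ s ≠ t then Y - Z else 0)))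
      = (∑ s : Fin m, ∑ t : Fin m, Z)
        + (∑ s : Fin m, ∑ t : Fin m, (if s = c ∧ t = c then X - Z else 0))
        + (∑ s : Fin m, ∑ t : Fin m, (if s ≠ c ∧ t ≠ c ∧ s ≠ t then Y - Z else 0)) := by
    simp [Finset.sum_add_distrib]
  rw [hsplit, sumA]
  have hZsum : (∑ _s : Fin m, ∑ _t : Fin m, Z) = (m : ℝ) * (m : ℝ) * Z := by
    simp [Finset.sum_const, Finset.card_univ, mul_assoc]
  have hBsum : (∑ s : Fin m, ∑ t : Fin m, (if s ≠ c ∧ t ≠ c ∧ s ≠ t then Y - Z else 0))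
      = ((m : ℝ) - 1) * (((m : ℝ) - 2) * (Y - Z)) := by
    have hinner : ∀ s : Fin m,
        (∑ t : Fin m, (if s ≠ c ∧ t ≠ c ∧ s ≠ t then Y - Z else 0))
        = (if s = c then 0 else ((m : ℝ) - 2) * (Y - Z)) := by
      intro s
      by_cases hs : s = c
      · simp [hs]
      · rw [sumB_inner m c s hs]
        simp [hs]
    simp_rw [hinner]
    have hh : ∀ x : Fin m, (if x = c then (0:ℝ) else ((m : ℝ) - 2) * (Y - Z))
        = ((m : ℝ) - 2) * (Y - Z) - (if x = c then ((m : ℝ) - 2) * (Y - Z) else 0) := by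
      intro x; by_cases hx : x = c <;> simp [hx]
    simp_rw [hh]
    rw [Finset.sum_sub_distrib, Finset.sum_const, Finset.sum_ite_eq' Finset.univ c]
    simp [Finset.card_univ, nsmul_eq_mul]
    ring
  rw [hZsum, hBsum]
  push_cast
  ring
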